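/- For every q ∈ (-1,1), every δ > 0 and all x, y with |x|, |y| ≤ 2/√(1-q), the infinite product ∏_{k=0}^∞ 1/φ_{q,k}(δ,x,y) is bounded above by e^{2δ} / ([16 sinh⁴(δ/2) + (1-q)(x-y)²] · ∏_{k=1}^∞ (1 - |q|^k)⁴). -/

import Mathlib

open Real Filter

/-- Factorization bound: the quadratic form is at least `(1-|r|)^4`. -/
lemma fac_bound (r u v : ℝ) (hr : |r| ≤ 1) (hu : |u| ≤ 1) (hv : |v| ≤ 1) :
    (1-|r|)^4 ≤ (1-r^2)^2 - 4*r*(1+r^2)*(u*v) + 4*r^2*(u^2+v^2) := by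
  obtain ⟨hu1, hu2⟩ := abs_le.mp hu
  obtain ⟨hv1, hv2⟩ := abs_le.mp hv
  have hu2' : u^2 ≤ 1 := by nlinarith
  have hv2' : v^2 ≤ 1 := by nlinarith
  have huv1 : u*v ≤ 1 := by nlinarith
  have huv2 : -1 ≤ u*v := by nlinarith
  set w := Real.sqrt ((1-u^2)*(1-v^2)) with hwdef
  have hw0 : 0 ≤ w := Real.sqrt_nonneg _
  have hw2 : w^2 = (1-u^2)*(1-v^2) :=
    Real.sq_sqrt (mul_nonneg (by linarith) (by linarith))
  have hwle1 : w ≤ 1 - u*v := by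
    calc w ≤ Real.sqrt ((1-u*v)^2) := Real.sqrt_le_sqrt (by nlinarith [sq_nonneg (u-v)])
      _ = 1 - u*v := Real.sqrt_sq (by linarith)
  have hwle2 : w ≤ 1 + u*v := by
    calc w ≤ Real.sqrt ((1+u*v)^2) := Real.sqrt_le_sqrt (by nlinarith [sq_nonneg (u+v)])
      _ = 1 + u*v := Real.sqrt_sq (by linarith)
  have h1 : u*v + w ≤ 1 := by linarith
  have h2 : -1 ≤ u*v - w := by linarith
  have hc1 : -1 ≤ u*v + w := by linarith
  have hc2 : u*v - w ≤ 1 := by linarith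
  have hfac : (1-r^2)^2 - 4*r*(1+r^2)*(u*v) + 4*r^2*(u^2+v^2)
      = (1 - 2*r*(u*v - w) + r^2) * (1 - 2*r*(u*v + w) + r^2) := by
    linear_combination (4*r^2) * hw2
  have key : ∀ c : ℝ, |c| ≤ 1 → (1-|r|)^2 ≤ 1 - 2*r*c + r^2 := by
    intro c hc
    have h' : r*c ≤ |r| := by
      calc r*c ≤ |r*c| := le_abs_self _
        _ = |r| * |c| := abs_mul _ _
        _ ≤ |r| * 1 := mul_le_mul_of_nonneg_left hc (abs_nonneg r)
        _ = |r| := mul_one _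
    nlinarith [sq_abs r]
  have hf1 : (1-|r|)^2 ≤ 1 - 2*r*(u*v - w) + r^2 := key _ (abs_le.2 ⟨h2, hc2⟩)
  have hf2 : (1-|r|)^2 ≤ 1 - 2*r*(u*v + w) + r^2 := key _ (abs_le.2 ⟨hc1, h1⟩)
  have h0 : (0:ℝ) ≤ (1-|r|)^2 := sq_nonneg _
  rw [hfac]
  calc (1-|r|)^4 = (1-|r|)^2 * (1-|r|)^2 := by ring
    _ ≤ (1 - 2*r*(u*v - w) + r^2) * (1 - 2*r*(u*v + w) + r^2) :=
        mul_le_mul hf1 hf2 h0 (le_trans h0 hf1)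

lemma fac_bound0 (r u v : ℝ) (hr0 : 0 < r) (hr1 : r ≤ 1) (huv : u*v ≤ 1) :
    (1-r)^4 + 4*r^2*(u-v)^2 ≤ (1-r^2)^2 - 4*r*(1+r^2)*(u*v) + 4*r^2*(u^2+v^2) := by
  nlinarith [mul_nonneg (mul_nonneg hr0.le (sq_nonneg (1-r))) (sub_nonneg.2 huv)]

lemma abs_log_le_aux {x c : ℝ} (hc : 0 < c) (hcx : c ≤ x) : |Real.log x| ≤ (1 + 1/c)*|x-1| := by
  have hx : 0 < x := lt_of_lt_of_le hc hcx
  have h1 : Real.log x ≤ x - 1 := Real.log_le_sub_one_of_pos hx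
  have h2 : Real.log x⁻¹ ≤ x⁻¹ - 1 := Real.log_le_sub_one_of_pos (inv_pos.2 hx)
  rw [Real.log_inv] at h2
  have hax : x - 1 ≤ |x-1| := le_abs_self _
  have hax2 : 1 - x ≤ |x-1| := by rw [abs_sub_comm]; exact le_abs_self _
  have habs0 : 0 ≤ |x-1| := abs_nonneg _
  have hcinv : 0 < 1/c := by positivity
  rw [abs_le]
  constructor
  · have hinv : x⁻¹ - 1 ≤ |x-1|/c := by
      have hh : x⁻¹ - 1 = (1-x)/x := by field_simp
      rw [hh]
      exact div_le_div₀ habs0 hax2 hc hcx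
    have heq : |x-1|/c = (1/c)*|x-1| := by ring
    nlinarith
  · nlinarith

lemma summable_log_aux (f : ℕ → ℝ) (c C r : ℝ) (hc : 0 < c) (hr0 : 0 ≤ r) (hr1 : r < 1)
    (hlb : ∀ n, c ≤ f n) (hub : ∀ n, |f n - 1| ≤ C * r^n) :
    Summable fun n => Real.log (f n) := by
  apply Summable.of_norm_bounded (g := fun n => ((1+1/c)*C) * r^n)
    ((summable_geometric_of_lt_one hr0 hr1).mul_left _)
  intro n
  have h1 : |Real.log (f n)| ≤ (1+1/c)*|f n - 1| := abs_log_le_aux hc (hlb n)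
  have h2 : (0:ℝ) ≤ 1 + 1/c := by positivity
  calc ‖Real.log (f n)‖ = |Real.log (f n)| := rfl
    _ ≤ (1+1/c)*|f n - 1| := h1
    _ ≤ (1+1/c)*(C*r^n) := mul_le_mul_of_nonneg_left (hub n) h2
    _ = ((1+1/c)*C)*r^n := by ring

lemma myHasProd (f : ℕ → ℝ) (hpos : ∀ n, 0 < f n)
    (hsum : Summable fun n => Real.log (f n)) :
    HasProd f (Real.exp (∑' n, Real.log (f n))) := by
  have h := hsum.hasSum.rexp
  have he : (Real.exp ∘ fun n => Real.log (f n)) = f :=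
    funext fun n => Real.exp_log (hpos n)
  rwa [he] at h

lemma abs_form_le (R u v t : ℝ) (hRt : |R| ≤ t) (ht1 : t ≤ 1) (hu : |u| ≤ 1) (hv : |v| ≤ 1) :
    |(1-R^2)^2 - 4*R*(1+R^2)*(u*v) + 4*R^2*(u^2+v^2) - 1| ≤ 19*t := by
  have ht0 : 0 ≤ t := le_trans (abs_nonneg R) hRt
  have hR2' : (0:ℝ) ≤ R^2 := sq_nonneg R
  have hR2 : R^2 ≤ t := by
    have h1 : R^2 ≤ t^2 := by rw [← sq_abs R]; exact pow_le_pow_left₀ (abs_nonneg R) hRt 2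
    nlinarith
  have hu2 : u^2 ≤ 1 := by rw [← sq_abs u]; exact pow_le_one₀ (abs_nonneg u) hu
  have hv2 : v^2 ≤ 1 := by rw [← sq_abs v]; exact pow_le_one₀ (abs_nonneg v) hv
  have e1 : (1-R^2)^2 - 4*R*(1+R^2)*(u*v) + 4*R^2*(u^2+v^2) - 1
      = (R^2*(R^2-2) - 4*(R*(1+R^2)*(u*v))) + 4*(R^2*(u^2+v^2)) := by ring
  rw [e1]
  have b1 : |R^2*(R^2-2)| ≤ t*2 := by
    have hA1 : |R^2| ≤ t := by rw [abs_of_nonneg hR2']; exact hR2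
    have hA2 : |R^2-2| ≤ 2 := abs_le.2 ⟨by linarith, by linarith⟩
    calc |R^2*(R^2-2)| = |R^2| * |R^2-2| := abs_mul _ _
      _ ≤ t*2 := mul_le_mul hA1 hA2 (abs_nonneg _) ht0
  have huv1 : |u*v| ≤ 1 := by
    rw [abs_mul]
    calc |u| * |v| ≤ 1*1 := mul_le_mul hu hv (abs_nonneg v) zero_le_one
      _ = 1 := one_mul _
  have h1R : |1+R^2| ≤ 2 := abs_le.2 ⟨by linarith, by linarith⟩
  have b2 : |4*(R*(1+R^2)*(u*v))| ≤ 8*t := by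
    rw [abs_mul, abs_mul, abs_mul, abs_of_nonneg (by norm_num : (0:ℝ) ≤ 4)]
    have hh : |R| * |1+R^2| * |u*v| ≤ t*2*1 :=
      mul_le_mul (mul_le_mul hRt h1R (abs_nonneg _) ht0) huv1 (abs_nonneg _) (by positivity)
    nlinarith [hh]
  have b3 : |4*(R^2*(u^2+v^2))| ≤ 8*t := by
    have hnn : (0:ℝ) ≤ R^2*(u^2+v^2) := by positivity
    rw [abs_mul, abs_of_nonneg (by norm_num : (0:ℝ) ≤ 4), abs_of_nonneg hnn]
    nlinarith
  calc |(R^2*(R^2-2) - 4*(R*(1+R^2)*(u*v))) + 4*(R^2*(u^2+v^2))|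
      ≤ |R^2*(R^2-2) - 4*(R*(1+R^2)*(u*v))| + |4*(R^2*(u^2+v^2))| := abs_add_le _ _
    _ ≤ (|R^2*(R^2-2)| + |4*(R*(1+R^2)*(u*v))|) + |4*(R^2*(u^2+v^2))| := by
        linarith [abs_sub (R^2*(R^2-2)) (4*(R*(1+R^2)*(u*v)))]
    _ ≤ 19*t := by linarith

lemma quartic_ub (t t' : ℝ) (ht0 : 0 ≤ t) (ht1 : t ≤ 1) (htk : t ≤ t') :
    |(1-t)^4 - 1| ≤ 15*t' := by
  refine abs_le.2 ⟨?_, ?_⟩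
  · nlinarith [sq_nonneg (1-t), sq_nonneg t]
  · nlinarith [pow_le_one₀ (by linarith : (0:ℝ) ≤ 1-t) (by linarith : 1-t ≤ 1) (n := 4)]

open Real Filter

/-- φ_{q,k}(δ,x,y) from the q-Ornstein–Uhlenbeck transition density. -/
noncomputable def phiQ (q : ℝ) (k : ℕ) (δ x y : ℝ) : ℝ :=
  (1 - Real.exp (-2*δ) * q^(2*k))^2
    - (1-q) * Real.exp (-δ) * q^k * (1 + Real.exp (-2*δ) * q^(2*k)) * x * y
    + (1-q) * Real.exp (-2*δ) * q^(2*k) * (x^2 + y^2)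

theorem stmt2 (q : ℝ) (hq : q ∈ Set.Ioo (-1:ℝ) 1) (δ : ℝ) (hδ : 0 < δ)
    (x y : ℝ) (hx : |x| ≤ 2 / Real.sqrt (1-q)) (hy : |y| ≤ 2 / Real.sqrt (1-q)) :
    (∏' k : ℕ, 1 / phiQ q k δ x y)
      ≤ Real.exp (2*δ) /
        ((16 * Real.sinh (δ/2) ^ 4 + (1-q)*(x-y)^2) * ∏' k : ℕ, (1 - |q|^(k+1))^4) := by
  obtain ⟨hqm, hqp⟩ := hq
  have h1q : (0:ℝ) < 1 - q := by linarith
  have hqabs : |q| < 1 := abs_lt.2 ⟨hqm, hqp⟩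
  have hqa0 : (0:ℝ) ≤ |q| := abs_nonneg q
  have hspos : 0 < Real.sqrt (1-q) := Real.sqrt_pos.2 h1q
  have hs2 : Real.sqrt (1-q)^2 = 1-q := Real.sq_sqrt h1q.le
  have hepos : 0 < Real.exp (-δ) := Real.exp_pos _
  have he1 : Real.exp (-δ) < 1 := by
    calc Real.exp (-δ) < Real.exp 0 := Real.exp_lt_exp.2 (by linarith)
      _ = 1 := Real.exp_zero
  set s : ℝ := Real.sqrt (1-q) with hsdef
  set u : ℝ := s*x/2 with hudef
  set v : ℝ := s*y/2 with hvdef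
  have hu : |u| ≤ 1 := by
    have h2 : |x| * s ≤ 2 := (le_div_iff₀ hspos).mp hx
    have h3 : |u| = s*|x|/2 := by
      rw [hudef, abs_div, abs_mul, abs_of_pos hspos]; norm_num
    rw [h3]; linarith
  have hv : |v| ≤ 1 := by
    have h2 : |y| * s ≤ 2 := (le_div_iff₀ hspos).mp hy
    have h3 : |v| = s*|y|/2 := by
      rw [hvdef, abs_div, abs_mul, abs_of_pos hspos]; norm_num
    rw [h3]; linarith
  -- rewrite phiQ in factored-friendly form
  have hphi : ∀ k : ℕ, phiQ q k δ x y
      = (1-(Real.exp (-δ)*q^k)^2)^2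
        - 4*(Real.exp (-δ)*q^k)*(1+(Real.exp (-δ)*q^k)^2)*(u*v)
        + 4*(Real.exp (-δ)*q^k)^2*(u^2+v^2) := by
    intro k
    have he2 : Real.exp (-2*δ) = Real.exp (-δ) * Real.exp (-δ) := by
      rw [← Real.exp_add]; ring_nf
    have hq2k : q^(2*k) = (q^k)^2 := by rw [mul_comm 2 k, pow_mul]
    rw [hudef, hvdef]
    simp only [phiQ]
    rw [he2, hq2k, ← hs2]
    ring
  have hrabs : ∀ k : ℕ, |Real.exp (-δ)*q^k| ≤ |q|^k := by
    intro k
    rw [abs_mul, abs_of_pos hepos, abs_pow]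
    calc Real.exp (-δ) * |q|^k ≤ 1 * |q|^k :=
          mul_le_mul_of_nonneg_right he1.le (by positivity)
      _ = |q|^k := one_mul _
  have hqk1 : ∀ k : ℕ, |q|^k ≤ 1 := fun k => pow_le_one₀ hqa0 hqabs.le
  have hbound : ∀ k : ℕ, (1-|q|^k)^4 ≤ phiQ q k δ x y := by
    intro k
    rw [hphi k]
    refine le_trans ?_ (fac_bound _ u v (le_trans (hrabs k) (hqk1 k)) hu hv)
    have h1 : 1 - |q|^k ≤ 1 - |Real.exp (-δ)*q^k| := by linarith [hrabs k]
    exact pow_le_pow_left₀ (by linarith [hqk1 k]) h1 4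
  -- sinh identity
  have hsinh : (1 - Real.exp (-δ))^4 = Real.exp (-δ)^2 * (16 * Real.sinh (δ/2)^4) := by
    have e2 : Real.exp (-δ) = Real.exp (-(δ/2)) * Real.exp (-(δ/2)) := by
      rw [← Real.exp_add]; ring_nf
    have e1 : Real.exp (-(δ/2)) * Real.exp (δ/2) = 1 := by
      rw [← Real.exp_add]; simp
    have key : 1 - Real.exp (-δ)
        = Real.exp (-(δ/2)) * (Real.exp (δ/2) - Real.exp (-(δ/2))) := by
      rw [mul_sub, e1, ← e2]
    rw [Real.sinh_eq, key, e2]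
    ring
  set A : ℝ := 16 * Real.sinh (δ/2)^4 + (1-q)*(x-y)^2 with hAdef
  have hsinhpos : 0 < Real.sinh (δ/2) := Real.sinh_pos_iff.2 (by linarith)
  have hApos : 0 < A := by
    have h1 : 0 < 16 * Real.sinh (δ/2)^4 := by positivity
    have h2 : 0 ≤ (1-q)*(x-y)^2 := mul_nonneg h1q.le (sq_nonneg _)
    rw [hAdef]; linarith
  have h4uv : 4*(u-v)^2 = (1-q)*(x-y)^2 := by
    rw [hudef, hvdef, ← hs2]; ring
  have hb0 : Real.exp (-δ)^2 * A ≤ phiQ q 0 δ x y := by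
    have huv : u*v ≤ 1 := by
      calc u*v ≤ |u*v| := le_abs_self _
        _ = |u| * |v| := abs_mul _ _
        _ ≤ 1 * 1 := mul_le_mul hu hv (abs_nonneg v) zero_le_one
        _ = 1 := one_mul _
    have h := fac_bound0 (Real.exp (-δ)) u v hepos he1.le huv
    have heq : Real.exp (-δ)^2 * A
        = (1-Real.exp (-δ))^4 + 4*Real.exp (-δ)^2*(u-v)^2 := by
      rw [hAdef, ← h4uv, hsinh]; ring
    rw [hphi 0]
    simp only [pow_zero, mul_one] at h ⊢
    linarith
  have hpos : ∀ k : ℕ, 0 < phiQ q k δ x y := by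
    intro k
    cases k with
    | zero => exact lt_of_lt_of_le (mul_pos (pow_pos hepos 2) hApos) hb0
    | succ n =>
      refine lt_of_lt_of_le ?_ (hbound (n+1))
      have h1 : |q|^(n+1) < 1 := pow_lt_one₀ hqa0 hqabs (Nat.succ_ne_zero n)
      have : (0:ℝ) < 1 - |q|^(n+1) := by linarith
      positivity
  -- |phiQ - 1| bound
  have hub : ∀ k : ℕ, |phiQ q k δ x y - 1| ≤ 19*|q|^k := by
    intro k
    rw [hphi k]
    exact abs_form_le _ u v _ (hrabs k) (hqk1 k) hu hv
  -- lower bound for phiQ, uniform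
  set cA : ℝ := min ((1-|q|)^4) (Real.exp (-δ)^2 * A) with hcAdef
  have hcA : 0 < cA :=
    lt_min (pow_pos (by linarith) 4) (mul_pos (pow_pos hepos 2) hApos)
  have hlb : ∀ k : ℕ, cA ≤ phiQ q k δ x y := by
    intro k
    cases k with
    | zero => exact le_trans (min_le_right _ _) hb0
    | succ n =>
      refine le_trans (min_le_left _ _) (le_trans ?_ (hbound (n+1)))
      have h1 : |q|^(n+1) ≤ |q| := by
        calc |q|^(n+1) ≤ |q|^1 := pow_le_pow_of_le_one hqa0 hqabs.le (by omega)
          _ = |q| := pow_one _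
      exact pow_le_pow_left₀ (by linarith) (by linarith) 4
  -- facts about f = 1/phiQ
  have hflb : ∀ k : ℕ, (1:ℝ)/20 ≤ 1/phiQ q k δ x y := by
    intro k
    have h1 : phiQ q k δ x y ≤ 20 := by
      have := hub k
      have := hqk1 k
      have h2 : phiQ q k δ x y - 1 ≤ |phiQ q k δ x y - 1| := le_abs_self _
      have h3 : (0:ℝ) ≤ |q|^k := by positivity
      nlinarith
    exact one_div_le_one_div_of_le (hpos k) h1
  have hfub : ∀ k : ℕ, |1/phiQ q k δ x y - 1| ≤ (19/cA)*|q|^k := by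
    intro k
    have hk := hpos k
    have heq : 1/phiQ q k δ x y - 1 = (1 - phiQ q k δ x y)/phiQ q k δ x y := by
      field_simp
    rw [heq, abs_div, abs_of_pos hk, abs_sub_comm]
    calc |phiQ q k δ x y - 1| / phiQ q k δ x y
        ≤ (19*|q|^k) / cA := div_le_div₀ (by positivity) (hub k) hcA (hlb k)
      _ = (19/cA)*|q|^k := by ring
  have hlogf : Summable (fun k => Real.log (1/phiQ q k δ x y)) :=
    summable_log_aux _ (1/20) (19/cA) |q| (by norm_num) hqa0 hqabs hflb hfub
  have hfHasProd : HasProd (fun k => 1/phiQ q k δ x y)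
      (Real.exp (∑' k, Real.log (1/phiQ q k δ x y))) :=
    myHasProd _ (fun k => one_div_pos.2 (hpos k)) hlogf
  -- facts about g
  set g : ℕ → ℝ := fun k => (1-|q|^(k+1))^4 with hgdef
  have hglb : ∀ k : ℕ, (1-|q|)^4 ≤ g k := by
    intro k
    have h1 : |q|^(k+1) ≤ |q| := by
      calc |q|^(k+1) ≤ |q|^1 := pow_le_pow_of_le_one hqa0 hqabs.le (by omega)
        _ = |q| := pow_one _
    exact pow_le_pow_left₀ (by linarith) (by linarith) 4
  have hgpos : ∀ k : ℕ, 0 < g k := fun k =>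
    lt_of_lt_of_le (pow_pos (by linarith) 4) (hglb k)
  have hgle1 : ∀ k : ℕ, g k ≤ 1 := by
    intro k
    have h0 : (0:ℝ) ≤ |q|^(k+1) := by positivity
    have h1 : |q|^(k+1) ≤ 1 := hqk1 (k+1)
    exact pow_le_one₀ (by linarith) (by linarith)
  have hgub : ∀ k : ℕ, |g k - 1| ≤ 15*|q|^k := by
    intro k
    have htk : |q|^(k+1) ≤ |q|^k := pow_le_pow_of_le_one hqa0 hqabs.le (Nat.le_succ k)
    have h0 : (0:ℝ) ≤ |q|^(k+1) := by positivity
    exact quartic_ub _ _ h0 (hqk1 (k+1)) htk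
  have hlogg : Summable (fun k => Real.log (g k)) :=
    summable_log_aux g ((1-|q|)^4) 15 |q| (pow_pos (by linarith) 4) hqa0 hqabs hglb hgub
  have hgHasProd : HasProd g (Real.exp (∑' k, Real.log (g k))) :=
    myHasProd g hgpos hlogg
  set P1 : ℝ := Real.exp (∑' k, Real.log (g k)) with hP1def
  have hP1pos : 0 < P1 := Real.exp_pos _
  have hP1eq : ∏' k : ℕ, (1 - |q|^(k+1))^4 = P1 := hgHasProd.tprod_eq
  rw [hP1eq]
  -- endgame via limit of partial products
  have hmul : Multipliable (fun k => 1/phiQ q k δ x y) := ⟨_, hfHasProd⟩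
  have ht : Tendsto (fun sf : Finset ℕ => ∏ i ∈ sf, 1/phiQ q i δ x y) atTop
      (nhds (∏' k : ℕ, 1/phiQ q k δ x y)) := hmul.hasProd
  refine le_of_tendsto ht ?_
  filter_upwards [eventually_ge_atTop ({0} : Finset ℕ)] with sf hsf
  have h0s : (0:ℕ) ∈ sf := hsf (Finset.mem_singleton_self 0)
  rw [← Finset.mul_prod_erase sf _ h0s]
  -- head bound
  have hf0 : 1/phiQ q 0 δ x y ≤ Real.exp (2*δ)/A := by
    have h1 : 1/phiQ q 0 δ x y ≤ 1/(Real.exp (-δ)^2 * A) :=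
      one_div_le_one_div_of_le (mul_pos (pow_pos hepos 2) hApos) hb0
    have hee : Real.exp (-δ)^2 * Real.exp (2*δ) = 1 := by
      rw [pow_two, ← Real.exp_add, ← Real.exp_add, ← Real.exp_zero]
      ring_nf
    have h2 : 1/(Real.exp (-δ)^2 * A) = Real.exp (2*δ)/A := by
      rw [div_eq_div_iff (mul_pos (pow_pos hepos 2) hApos).ne' hApos.ne']
      linear_combination (-A) * hee
    rw [← h2]; exact h1
  -- tail bound
  have htail : ∏ i ∈ sf.erase 0, (1/phiQ q i δ x y) ≤ 1/P1 := by
    have step1 : ∏ i ∈ sf.erase 0, (1/phiQ q i δ x y)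
        ≤ ∏ i ∈ sf.erase 0, 1/(1-|q|^i)^4 := by
      refine Finset.prod_le_prod (fun i _ => (one_div_pos.2 (hpos i)).le) ?_
      intro i hi
      have hi0 : i ≠ 0 := Finset.ne_of_mem_erase hi
      have hi1 : (0:ℝ) < (1-|q|^i)^4 := by
        have := pow_lt_one₀ hqa0 hqabs hi0
        have : (0:ℝ) < 1 - |q|^i := by linarith
        positivity
      exact one_div_le_one_div_of_le hi1 (hbound i)
    have step2 : ∏ i ∈ sf.erase 0, (1/(1-|q|^i)^4)
        = 1/∏ i ∈ sf.erase 0, (1-|q|^i)^4 := by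
      rw [Finset.prod_div_distrib, Finset.prod_const_one]
    have hsub : P1 ≤ ∏ i ∈ sf.erase 0, (1-|q|^i)^4 := by
      set T0 : Finset ℕ := (sf.erase 0).image (· - 1) with hT0def
      have htg : Tendsto (fun tf : Finset ℕ => ∏ k ∈ tf, g k) atTop (nhds P1) :=
        hgHasProd
      refine le_of_tendsto htg ?_
      filter_upwards [eventually_ge_atTop T0] with tf htf
      have himg : ∏ k ∈ T0, g k = ∏ i ∈ sf.erase 0, (1-|q|^i)^4 := by
        rw [hT0def, Finset.prod_image]
        · refine Finset.prod_congr rfl (fun i hi => ?_)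
          have hi0 : i ≠ 0 := Finset.ne_of_mem_erase hi
          have hieq : i - 1 + 1 = i := Nat.succ_pred_eq_of_pos (Nat.pos_of_ne_zero hi0)
          rw [hgdef]
          simp only [hieq]
        · intro i hi j hj hij
          have hi0 : i ≠ 0 := Finset.ne_of_mem_erase hi
          have hj0 : j ≠ 0 := Finset.ne_of_mem_erase hj
          simp only at hij
          omega
      calc ∏ k ∈ tf, g k = (∏ k ∈ tf \ T0, g k) * ∏ k ∈ T0, g k :=
            (Finset.prod_sdiff htf).symm
        _ ≤ 1 * ∏ k ∈ T0, g k := by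
            refine mul_le_mul_of_nonneg_right ?_
              (Finset.prod_nonneg fun k _ => (hgpos k).le)
            exact Finset.prod_le_one (fun k _ => (hgpos k).le) (fun k _ => hgle1 k)
        _ = ∏ i ∈ sf.erase 0, (1-|q|^i)^4 := by rw [one_mul, himg]
    calc ∏ i ∈ sf.erase 0, (1/phiQ q i δ x y)
        ≤ ∏ i ∈ sf.erase 0, (1/(1-|q|^i)^4) := step1
      _ = 1/∏ i ∈ sf.erase 0, (1-|q|^i)^4 := step2
      _ ≤ 1/P1 := one_div_le_one_div_of_le hP1pos hsub
  calc (1/phiQ q 0 δ x y) * ∏ i ∈ sf.erase 0, (1/phiQ q i δ x y)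
      ≤ (Real.exp (2*δ)/A) * (1/P1) := by
        refine mul_le_mul hf0 htail
          (Finset.prod_nonneg fun i _ => (one_div_pos.2 (hpos i)).le) (by positivity)
    _ = Real.exp (2*δ)/(A*P1) := by rw [div_mul_div_comm, mul_one]
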